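/- Let $q : \mathbb{R} \to \mathbb{R}$ be the $4\sqrt 2$-periodic function with $q(t) = 1 - t^2/2$ for $|t| \le \sqrt 2$ and $q(t + 2\sqrt 2) = -q(t)$ for all $t$. Then $q$ is differentiable on $\mathbb{R}$, $q'$ is Lipschitz of constant $1$, $\|q\|_\infty = 1$, $\|q'\|_\infty = \sqrt 2$, and $q$ satisfies the differential equation $|q(t)| = 1 - q'(t)^2/2$ for all $t$. -/

import Mathlib

open Set Real

noncomputable def cpN (t : ℝ) : ℤ := round (t / (2 * Real.sqrt 2))

noncomputable def cpG (t : ℝ) : ℝ :=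
  (-1 : ℝ) ^ (cpN t + 1) * (t - 2 * Real.sqrt 2 * cpN t)

lemma cp_ha : (0:ℝ) < Real.sqrt 2 := Real.sqrt_pos.mpr (by norm_num)

lemma cp_ha2 : Real.sqrt 2 ^ 2 = 2 := Real.sq_sqrt (by norm_num)

lemma cpN_dist (t : ℝ) : |t - 2 * Real.sqrt 2 * cpN t| ≤ Real.sqrt 2 := by
  have hp : (0:ℝ) < 2 * Real.sqrt 2 := by positivity
  have h : |t / (2 * Real.sqrt 2) - (cpN t : ℝ)| ≤ 1/2 := abs_sub_round _
  have he : t - 2 * Real.sqrt 2 * cpN t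
      = (t / (2 * Real.sqrt 2) - cpN t) * (2 * Real.sqrt 2) := by
    field_simp
  rw [he, abs_mul, abs_of_pos hp]
  nlinarith [abs_nonneg (t / (2 * Real.sqrt 2) - (cpN t : ℝ)), cp_ha]

lemma cpN_of_eq (t : ℝ) (n : ℤ) (h : t = 2 * Real.sqrt 2 * n - Real.sqrt 2) :
    cpN t = n := by
  have hp : (0:ℝ) < 2 * Real.sqrt 2 := by positivity
  have hd : t / (2 * Real.sqrt 2) = (n : ℝ) + (-1/2 : ℝ) := by
    rw [h]; field_simp; ring
  rw [cpN, hd, round_intCast_add]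
  norm_num [round_eq]

lemma cpN_of_eq' (t : ℝ) (n : ℤ) (h : t = 2 * Real.sqrt 2 * n + Real.sqrt 2) :
    cpN t = n + 1 := by
  have hp : (0:ℝ) < 2 * Real.sqrt 2 := by positivity
  have hd : t / (2 * Real.sqrt 2) = (n : ℝ) + (1/2 : ℝ) := by
    rw [h]; field_simp
  rw [cpN, hd, round_intCast_add]
  norm_num [round_eq]

lemma cpN_mono {t u : ℝ} (h : t ≤ u) : cpN t ≤ cpN u := by
  have hp : (0:ℝ) < 2 * Real.sqrt 2 := by positivity
  have hd : t / (2 * Real.sqrt 2) ≤ u / (2 * Real.sqrt 2) := by gcongr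
  simp only [cpN, round_eq]
  exact Int.floor_mono (by linarith)

lemma cp_abs_pow (j : ℤ) : |(-1 : ℝ) ^ j| = 1 := by
  rcases Int.even_or_odd j with h | h
  · rw [h.neg_one_zpow]; norm_num
  · rw [h.neg_one_zpow]; norm_num

lemma cpG_abs (t : ℝ) : |cpG t| = |t - 2 * Real.sqrt 2 * cpN t| := by
  rw [cpG, abs_mul, cp_abs_pow, one_mul]

lemma cpG_est : ∀ k : ℕ, ∀ t u : ℝ, t ≤ u → (cpN u - cpN t).toNat = k →
    |cpG u - cpG t| ≤ u - t := by
  intro k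
  induction k with
  | zero =>
    intro t u htu hk
    have hm : cpN t = cpN u := le_antisymm (cpN_mono htu) (by omega)
    have : cpG u - cpG t = (-1 : ℝ) ^ (cpN t + 1) * (u - t) := by
      rw [cpG, cpG, hm]; ring
    rw [this, abs_mul, cp_abs_pow, one_mul, abs_of_nonneg (by linarith)]
  | succ k ih =>
    intro t u htu hk
    set m := cpN t with hm
    set n := cpN u with hn
    have hmn : m + 1 ≤ n := by omega
    set c := 2 * Real.sqrt 2 * m + Real.sqrt 2 with hc
    have htc : t ≤ c := by
      have := cpN_dist t
      rw [abs_le] at this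
      simp only [← hm] at this
      linarith [this.2]
    have hcu : c ≤ u := by
      have h1 := cpN_dist u
      rw [abs_le] at h1
      have h3 : ((m:ℝ) + 1) ≤ (n:ℝ) := by exact_mod_cast hmn
      have h2 : 2 * Real.sqrt 2 * ((m:ℝ) + 1) ≤ 2 * Real.sqrt 2 * (n:ℝ) := by
        nlinarith [cp_ha]
      simp only [← hn] at h1
      linarith [h1.1]
    have hNc : cpN c = m + 1 := cpN_of_eq' c m rfl
    have hGc : cpG c = (-1 : ℝ) ^ (m + 1) * (c - 2 * Real.sqrt 2 * m) := by
      rw [cpG, hNc]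
      have h1 : c - 2 * Real.sqrt 2 * ((m : ℤ) + 1 : ℤ) = -(c - 2 * Real.sqrt 2 * m) := by
        push_cast; rw [hc]; ring
      have h2 : (-1 : ℝ) ^ (m + 1 + 1) = -(-1 : ℝ) ^ (m + 1) := by
        rw [zpow_add_one₀ (by norm_num : (-1:ℝ) ≠ 0)]; ring
      rw [h1, h2]; push_cast; ring
    have hct : |cpG c - cpG t| = c - t := by
      have : cpG c - cpG t = (-1 : ℝ) ^ (m + 1) * (c - t) := by
        rw [hGc, cpG, ← hm]; ring
      rw [this, abs_mul, cp_abs_pow, one_mul, abs_of_nonneg (by linarith)]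
    have hih : |cpG u - cpG c| ≤ u - c := ih c u hcu (by omega)
    calc |cpG u - cpG t| ≤ |cpG u - cpG c| + |cpG c - cpG t| := abs_sub_le _ _ _
      _ ≤ (u - c) + (c - t) := by gcongr; exact hct.le
      _ = u - t := by ring

lemma cp_iter (q : ℝ → ℝ) (hanti : ∀ t : ℝ, q (t + 2 * Real.sqrt 2) = -q t) :
    ∀ n : ℤ, ∀ t : ℝ, q (t + 2 * Real.sqrt 2 * n) = (-1 : ℝ) ^ n * q t := by
  intro n
  induction n using Int.induction_on with
  | zero => simp
  | succ k ih =>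
    intro t
    have he : t + 2 * Real.sqrt 2 * ((k : ℤ) + 1 : ℤ) = (t + 2 * Real.sqrt 2 * (k : ℤ)) + 2 * Real.sqrt 2 := by
      push_cast; ring
    rw [he, hanti, ih, zpow_add_one₀ (by norm_num : (-1:ℝ) ≠ 0)]
    ring
  | pred k ih =>
    intro t
    have h1 : (t + 2 * Real.sqrt 2 * (-(k : ℤ) - 1 : ℤ)) + 2 * Real.sqrt 2
        = t + 2 * Real.sqrt 2 * (-(k : ℤ) : ℤ) := by push_cast; ring
    have h2 := hanti (t + 2 * Real.sqrt 2 * (-(k : ℤ) - 1 : ℤ))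
    rw [h1, ih] at h2
    have h3 : (-1 : ℝ) ^ (-(k : ℤ) - 1 : ℤ) = -(-1 : ℝ) ^ (-(k : ℤ)) := by
      rw [zpow_sub_one₀ (by norm_num : (-1:ℝ) ≠ 0)]; norm_num
    rw [h3]; linarith
lemma cp_formula (q : ℝ → ℝ)
    (hval : ∀ t : ℝ, |t| ≤ Real.sqrt 2 → q t = 1 - t ^ 2 / 2)
    (hanti : ∀ t : ℝ, q (t + 2 * Real.sqrt 2) = -q t)
    (n : ℤ) (t : ℝ) (h : |t - 2 * Real.sqrt 2 * n| ≤ Real.sqrt 2) :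
    q t = (-1 : ℝ) ^ n * (1 - (t - 2 * Real.sqrt 2 * n) ^ 2 / 2) := by
  have h1 := cp_iter q hanti n (t - 2 * Real.sqrt 2 * n)
  rw [sub_add_cancel] at h1
  rw [h1, hval _ h]

lemma cp_fderiv (m : ℤ) (x : ℝ) :
    HasDerivAt (fun u : ℝ => (-1:ℝ) ^ m * (1 - (u - 2 * Real.sqrt 2 * m) ^ 2 / 2))
      ((-1:ℝ) ^ m * (-(x - 2 * Real.sqrt 2 * m))) x := by
  have h1 : HasDerivAt (fun u : ℝ => u - 2 * Real.sqrt 2 * m) 1 x :=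
    (hasDerivAt_id x).sub_const _
  have h2 := h1.pow 2
  have h3 := ((h2.div_const 2).const_sub 1).const_mul ((-1:ℝ) ^ m)
  convert h3 using 1
  exacts [rfl, rfl, rfl, by simp]

lemma cp_hasDerivAt (q : ℝ → ℝ)
    (hval : ∀ t : ℝ, |t| ≤ Real.sqrt 2 → q t = 1 - t ^ 2 / 2)
    (hanti : ∀ t : ℝ, q (t + 2 * Real.sqrt 2) = -q t) (t : ℝ) :
    HasDerivAt q (cpG t) t := by
  set a := Real.sqrt 2 with ha
  set n := cpN t with hn
  have hs : |t - 2 * a * n| ≤ a := cpN_dist t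
  rw [abs_le] at hs
  have ha0 : (0:ℝ) < a := cp_ha
  have hGt : cpG t = (-1:ℝ) ^ n * (-(t - 2 * a * n)) := by
    rw [cpG, ← hn, zpow_add_one₀ (by norm_num : (-1:ℝ) ≠ 0)]; ring
  rcases eq_or_lt_of_le hs.2 with heq | hlt
  · -- t - 2an = a: impossible
    exfalso
    have : cpN t = n + 1 := cpN_of_eq' t n (by linarith)
    omega
  rcases eq_or_lt_of_le hs.1 with heq | hgt
  · -- t = 2an - a : junction point
    have htv : t = 2 * a * n - a := by linarith
    set d : ℝ := (-1:ℝ) ^ n * a with hd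
    have hdG : cpG t = d := by rw [hGt, htv]; ring
    -- right side
    have hio : Ico t (2 * a * n + a) ∈ nhdsWithin t (Ici t) :=
      Ico_mem_nhdsGE (by linarith)
    have hevr : q =ᶠ[nhdsWithin t (Ici t)] fun u => (-1:ℝ) ^ n * (1 - (u - 2 * a * n) ^ 2 / 2) := by
      refine Filter.eventuallyEq_of_mem hio fun u hu => ?_
      exact cp_formula q hval hanti n u (abs_le.mpr ⟨by linarith [hu.1], by linarith [hu.2]⟩)
    have hr0 : HasDerivAt q ((-1:ℝ) ^ n * (-(t - 2 * a * n))) t → True := fun _ => trivial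
    have hr : HasDerivWithinAt q d (Ici t) t := by
      have := ((cp_fderiv n t).hasDerivWithinAt (s := Ici t)).congr_of_eventuallyEq hevr
        (cp_formula q hval hanti n t (abs_le.mpr ⟨hs.1, hs.2⟩))
      have hv : (-1:ℝ) ^ n * (-(t - 2 * a * n)) = d := by rw [htv, hd]; ring
      rwa [hv] at this
    -- left side : t = 2a(n-1) + a
    have htv' : t = 2 * a * ((n : ℤ) - 1 : ℤ) + a := by push_cast; linarith
    have hio' : Ioc (2 * a * ((n:ℤ) - 1 : ℤ) - a) t ∈ nhdsWithin t (Iic t) := by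
      refine Ioc_mem_nhdsLE_of_mem ⟨?_, le_refl t⟩
      push_cast; push_cast at htv'; linarith
    have hevl : q =ᶠ[nhdsWithin t (Iic t)]
        fun u => (-1:ℝ) ^ ((n:ℤ) - 1 : ℤ) * (1 - (u - 2 * a * ((n:ℤ) - 1 : ℤ)) ^ 2 / 2) := by
      refine Filter.eventuallyEq_of_mem hio' fun u hu => ?_
      refine cp_formula q hval hanti ((n:ℤ) - 1) u (abs_le.mpr ⟨by linarith [hu.1], ?_⟩)
      have := hu.2
      push_cast; push_cast at htv' hu ⊢; linarith
    have hl : HasDerivWithinAt q d (Iic t) t := by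
      have h0 := ((cp_fderiv ((n:ℤ) - 1) t).hasDerivWithinAt (s := Iic t)).congr_of_eventuallyEq hevl
        (by
          refine cp_formula q hval hanti ((n:ℤ) - 1) t (abs_le.mpr ⟨?_, ?_⟩) <;>
            (push_cast; push_cast at htv'; linarith))
      have hv : (-1:ℝ) ^ ((n:ℤ) - 1 : ℤ) * (-(t - 2 * a * ((n:ℤ) - 1 : ℤ))) = d := by
        rw [hd, zpow_sub_one₀ (by norm_num : (-1:ℝ) ≠ 0)]
        push_cast; push_cast at htv'
        rw [htv']; ring_nf
      rwa [hv] at h0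
    have := hl.union hr
    rw [Iic_union_Ici, hasDerivWithinAt_univ] at this
    rwa [hdG]
  · -- interior
    have hmem : Ioo (2 * a * n - a) (2 * a * n + a) ∈ nhds t :=
      isOpen_Ioo.mem_nhds ⟨by linarith, by linarith⟩
    have hev : q =ᶠ[nhds t] fun u => (-1:ℝ) ^ n * (1 - (u - 2 * a * n) ^ 2 / 2) := by
      refine Filter.eventuallyEq_of_mem hmem fun u hu => ?_
      exact cp_formula q hval hanti n u (abs_le.mpr ⟨by linarith [hu.1], by linarith [hu.2]⟩)
    have := (cp_fderiv n t).congr_of_eventuallyEq hev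
    rwa [hGt]

theorem comparison_function_properties (q : ℝ → ℝ)
    (hper : Function.Periodic q (4 * Real.sqrt 2))
    (hval : ∀ t : ℝ, |t| ≤ Real.sqrt 2 → q t = 1 - t ^ 2 / 2)
    (hanti : ∀ t : ℝ, q (t + 2 * Real.sqrt 2) = -q t) :
    Differentiable ℝ q ∧
    LipschitzWith 1 (deriv q) ∧
    IsGreatest (Set.range fun t => |q t|) 1 ∧
    IsGreatest (Set.range fun t => |deriv q t|) (Real.sqrt 2) ∧
    ∀ t : ℝ, |q t| = 1 - (deriv q t) ^ 2 / 2 := by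
  have hD : ∀ t, HasDerivAt q (cpG t) t := cp_hasDerivAt q hval hanti
  have hderiv : deriv q = cpG := funext fun t => (hD t).deriv
  have hlast : ∀ t : ℝ, |q t| = 1 - (deriv q t) ^ 2 / 2 := by
    intro t
    have hs := cpN_dist t
    have hq := cp_formula q hval hanti (cpN t) t hs
    have h1 : (deriv q t) ^ 2 = (t - 2 * Real.sqrt 2 * cpN t) ^ 2 := by
      rw [hderiv, ← sq_abs, cpG_abs, sq_abs]
    have hsq : (t - 2 * Real.sqrt 2 * cpN t) ^ 2 ≤ 2 := by
      nlinarith [sq_abs (t - 2 * Real.sqrt 2 * cpN t), cp_ha2, cp_ha,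
        abs_nonneg (t - 2 * Real.sqrt 2 * cpN t)]
    rw [hq, abs_mul, cp_abs_pow, one_mul, abs_of_nonneg (by linarith), h1]
  refine ⟨fun t => (hD t).differentiableAt, ?_, ⟨⟨0, ?_⟩, ?_⟩, ⟨⟨Real.sqrt 2, ?_⟩, ?_⟩, hlast⟩
  · -- Lipschitz
    rw [hderiv]
    refine LipschitzWith.of_dist_le_mul fun x y => ?_
    rw [Real.dist_eq, Real.dist_eq, NNReal.coe_one, one_mul]
    rcases le_total x y with h | h
    · rw [abs_sub_comm]
      refine (cpG_est _ x y h rfl).trans ?_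
      rw [abs_sub_comm]
      exact le_abs_self _
    · exact (cpG_est _ y x h rfl).trans (le_abs_self _)
  · -- |q 0| = 1
    show |q 0| = 1
    rw [hval 0 (by simp [cp_ha.le])]
    norm_num
  · -- upper bound 1
    rintro y ⟨t, rfl⟩
    have := hlast t
    simp only at this ⊢
    rw [this]
    nlinarith [sq_nonneg (deriv q t)]
  · -- |deriv q √2| = √2
    show |deriv q (Real.sqrt 2)| = Real.sqrt 2
    have h1 : cpN (Real.sqrt 2) = 1 := by
      have := cpN_of_eq' (Real.sqrt 2) 0 (by push_cast; ring)
      omega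
    have h2 : cpG (Real.sqrt 2) = -Real.sqrt 2 := by
      rw [cpG, h1]
      norm_num
      ring
    rw [hderiv, h2, abs_neg, abs_of_nonneg cp_ha.le]
  · -- upper bound √2
    rintro y ⟨t, rfl⟩
    simp only
    rw [hderiv]
    exact (cpG_abs t).le.trans (cpN_dist t) |>.trans_eq rfl
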